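/- Let U_{n,g}^l be the unicyclic graph obtained by joining a pendant vertex of the path P_{n−g} to a vertex of the cycle C_g by an edge. If u is the pendant vertex of U_{n,g}^l and v is any non-pendant vertex, then D(u) > D(v). -/

import Mathlib

open Finset SimpleGraph

/-- The sum of distances from `u` to all vertices of `G`. -/
noncomputable def distSum {V : Type*} [Fintype V] (G : SimpleGraph V) (u : V) : ℕ :=
  ∑ v, G.dist u v

/-- The Wiener index of `G`: the sum of distances over all unordered pairs of vertices. -/
noncomputable def wienerIndex {V : Type*} [Fintype V] (G : SimpleGraph V) : ℕ :=
  (∑ u : V, ∑ v : V, G.dist u v) / 2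

/-- The lollipop U_{n,g}^l: a cycle on vertices 0,…,g-1 with the path g,…,n-1 attached
by the edge {0, g}; the vertex n-1 is its unique pendant vertex. -/
def lollipop (n g : ℕ) : SimpleGraph (Fin n) :=
  SimpleGraph.fromRel (fun i j =>
    (j.val = i.val + 1 ∧ j.val < g) ∨ (i.val = 0 ∧ j.val = g - 1) ∨
    (i.val = 0 ∧ j.val = g) ∨ (g ≤ i.val ∧ j.val = i.val + 1))

def cyc (g a b : ℕ) : ℕ := min (max a b - min a b) (g - (max a b - min a b))

def dfun (g a b : ℕ) : ℕ :=
  if a < g then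
    if b < g then cyc g a b
    else min a (g - a) + (b - g + 1)
  else
    if b < g then min b (g - b) + (a - g + 1)
    else max a b - min a b

lemma lollipop_adj {n g : ℕ} (x y : Fin n) :
    (lollipop n g).Adj x y ↔ x ≠ y ∧
      (((y.val = x.val + 1 ∧ y.val < g) ∨ (x.val = 0 ∧ y.val = g - 1) ∨
        (x.val = 0 ∧ y.val = g) ∨ (g ≤ x.val ∧ y.val = x.val + 1)) ∨
       ((x.val = y.val + 1 ∧ x.val < g) ∨ (y.val = 0 ∧ x.val = g - 1) ∨
        (y.val = 0 ∧ x.val = g) ∨ (g ≤ y.val ∧ x.val = y.val + 1))) := by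
  rw [lollipop, SimpleGraph.fromRel_adj]

lemma step_exists {n g : ℕ} (hg : 3 ≤ g) (hn : g < n) (x y : Fin n) (hxy : x ≠ y) :
    ∃ z : Fin n, (lollipop n g).Adj x z ∧ dfun g z.val y.val < dfun g x.val y.val := by
  have hx := x.isLt
  have hy := y.isLt
  have hne : x.val ≠ y.val := fun h => hxy (Fin.ext h)
  set a := x.val with ha
  set b := y.val with hb
  by_cases h1 : g ≤ a
  · by_cases h2 : a < b
    · -- move up the path
      obtain ⟨z, hzv⟩ : ∃ z : Fin n, z.val = a+1 := ⟨⟨a+1, by omega⟩, rfl⟩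
      refine ⟨z, ?_, ?_⟩
      · rw [lollipop_adj]
        exact ⟨by rw [ne_eq, Fin.ext_iff]; omega, Or.inl (Or.inr (Or.inr (Or.inr ⟨by omega, by omega⟩)))⟩
      · simp only [dfun, cyc]; split_ifs <;> omega
    · by_cases h3 : a = g
      · -- move to vertex 0
        obtain ⟨z, hzv⟩ : ∃ z : Fin n, z.val = 0 := ⟨⟨0, by omega⟩, rfl⟩
        refine ⟨z, ?_, ?_⟩
        · rw [lollipop_adj]
          exact ⟨by rw [ne_eq, Fin.ext_iff]; omega, Or.inr (Or.inr (Or.inr (Or.inl ⟨by omega, by omega⟩)))⟩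
        · simp only [dfun, cyc]; split_ifs <;> omega
      · -- move down the path
        obtain ⟨z, hzv⟩ : ∃ z : Fin n, z.val = a-1 := ⟨⟨a-1, by omega⟩, rfl⟩
        refine ⟨z, ?_, ?_⟩
        · rw [lollipop_adj]
          exact ⟨by rw [ne_eq, Fin.ext_iff]; omega, Or.inr (Or.inr (Or.inr (Or.inr ⟨by omega, by omega⟩)))⟩
        · simp only [dfun, cyc]; split_ifs <;> omega
  · by_cases h2 : g ≤ b
    · by_cases h3 : a = 0
      · -- move to vertex g
        obtain ⟨z, hzv⟩ : ∃ z : Fin n, z.val = g := ⟨⟨g, by omega⟩, rfl⟩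
        refine ⟨z, ?_, ?_⟩
        · rw [lollipop_adj]
          exact ⟨by rw [ne_eq, Fin.ext_iff]; omega, Or.inl (Or.inr (Or.inr (Or.inl ⟨by omega, by omega⟩)))⟩
        · simp only [dfun, cyc]; split_ifs <;> omega
      · by_cases h4 : 2*a ≤ g
        · -- move down cycle toward 0
          obtain ⟨z, hzv⟩ : ∃ z : Fin n, z.val = a-1 := ⟨⟨a-1, by omega⟩, rfl⟩
          refine ⟨z, ?_, ?_⟩
          · rw [lollipop_adj]
            exact ⟨by rw [ne_eq, Fin.ext_iff]; omega, Or.inr (Or.inl ⟨by omega, by omega⟩)⟩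
          · simp only [dfun, cyc]; split_ifs <;> omega
        · by_cases h5 : a + 1 < g
          · -- move up cycle toward g-1
            obtain ⟨z, hzv⟩ : ∃ z : Fin n, z.val = a+1 := ⟨⟨a+1, by omega⟩, rfl⟩
            refine ⟨z, ?_, ?_⟩
            · rw [lollipop_adj]
              exact ⟨by rw [ne_eq, Fin.ext_iff]; omega, Or.inl (Or.inl ⟨by omega, by omega⟩)⟩
            · simp only [dfun, cyc]; split_ifs <;> omega
          · -- a = g-1, jump to 0
            obtain ⟨z, hzv⟩ : ∃ z : Fin n, z.val = 0 := ⟨⟨0, by omega⟩, rfl⟩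
            refine ⟨z, ?_, ?_⟩
            · rw [lollipop_adj]
              exact ⟨by rw [ne_eq, Fin.ext_iff]; omega, Or.inr (Or.inr (Or.inl ⟨by omega, by omega⟩))⟩
            · simp only [dfun, cyc]; split_ifs <;> omega
    · by_cases h3 : a < b
      · by_cases h4 : 2*(b-a) ≤ g
        · -- move up cycle toward b
          obtain ⟨z, hzv⟩ : ∃ z : Fin n, z.val = a+1 := ⟨⟨a+1, by omega⟩, rfl⟩
          refine ⟨z, ?_, ?_⟩
          · rw [lollipop_adj]
            exact ⟨by rw [ne_eq, Fin.ext_iff]; omega, Or.inl (Or.inl ⟨by omega, by omega⟩)⟩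
          · simp only [dfun, cyc]; split_ifs <;> omega
        · by_cases h5 : a = 0
          · -- jump to g-1
            obtain ⟨z, hzv⟩ : ∃ z : Fin n, z.val = g-1 := ⟨⟨g-1, by omega⟩, rfl⟩
            refine ⟨z, ?_, ?_⟩
            · rw [lollipop_adj]
              exact ⟨by rw [ne_eq, Fin.ext_iff]; omega, Or.inl (Or.inr (Or.inl ⟨by omega, by omega⟩))⟩
            · simp only [dfun, cyc]; split_ifs <;> omega
          · -- move down cycle
            obtain ⟨z, hzv⟩ : ∃ z : Fin n, z.val = a-1 := ⟨⟨a-1, by omega⟩, rfl⟩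
            refine ⟨z, ?_, ?_⟩
            · rw [lollipop_adj]
              exact ⟨by rw [ne_eq, Fin.ext_iff]; omega, Or.inr (Or.inl ⟨by omega, by omega⟩)⟩
            · simp only [dfun, cyc]; split_ifs <;> omega
      · by_cases h4 : 2*(a-b) ≤ g
        · -- move down cycle toward b
          obtain ⟨z, hzv⟩ : ∃ z : Fin n, z.val = a-1 := ⟨⟨a-1, by omega⟩, rfl⟩
          refine ⟨z, ?_, ?_⟩
          · rw [lollipop_adj]
            exact ⟨by rw [ne_eq, Fin.ext_iff]; omega, Or.inr (Or.inl ⟨by omega, by omega⟩)⟩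
          · simp only [dfun, cyc]; split_ifs <;> omega
        · by_cases h5 : a + 1 < g
          · -- move up cycle
            obtain ⟨z, hzv⟩ : ∃ z : Fin n, z.val = a+1 := ⟨⟨a+1, by omega⟩, rfl⟩
            refine ⟨z, ?_, ?_⟩
            · rw [lollipop_adj]
              exact ⟨by rw [ne_eq, Fin.ext_iff]; omega, Or.inl (Or.inl ⟨by omega, by omega⟩)⟩
            · simp only [dfun, cyc]; split_ifs <;> omega
          · -- a = g-1, jump to 0
            obtain ⟨z, hzv⟩ : ∃ z : Fin n, z.val = 0 := ⟨⟨0, by omega⟩, rfl⟩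
            refine ⟨z, ?_, ?_⟩
            · rw [lollipop_adj]
              exact ⟨by rw [ne_eq, Fin.ext_iff]; omega, Or.inr (Or.inr (Or.inl ⟨by omega, by omega⟩))⟩
            · simp only [dfun, cyc]; split_ifs <;> omega

lemma adj_dfun {n g : ℕ} (hg : 3 ≤ g) (hn : g < n) {x z : Fin n}
    (h : (lollipop n g).Adj x z) (b : ℕ) :
    dfun g x.val b ≤ dfun g z.val b + 1 := by
  rw [lollipop_adj] at h
  obtain ⟨hne, hrel⟩ := h
  have hx := x.isLt
  have hz := z.isLt
  have hne' : x.val ≠ z.val := fun h => hne (Fin.ext h)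
  simp only [dfun, cyc]
  rcases hrel with (⟨h1,h2⟩|⟨h1,h2⟩|⟨h1,h2⟩|⟨h1,h2⟩)|(⟨h1,h2⟩|⟨h1,h2⟩|⟨h1,h2⟩|⟨h1,h2⟩) <;>
    split_ifs <;> omega

lemma dfun_self (g a : ℕ) (hg : 3 ≤ g) : dfun g a a = 0 := by
  simp only [dfun, cyc]; split_ifs <;> omega

lemma exists_walk_le {n g : ℕ} (hg : 3 ≤ g) (hn : g < n) :
    ∀ (k : ℕ) (x y : Fin n), dfun g x.val y.val ≤ k →
      ∃ w : (lollipop n g).Walk x y, w.length ≤ dfun g x.val y.val := by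
  intro k
  induction k with
  | zero =>
    intro x y hk
    have hxy : x = y := by
      by_contra hne
      obtain ⟨z, _, hlt⟩ := step_exists hg hn x y hne
      omega
    subst hxy
    exact ⟨Walk.nil, by simp⟩
  | succ k ih =>
    intro x y hk
    by_cases hxy : x = y
    · subst hxy; exact ⟨Walk.nil, by simp⟩
    · obtain ⟨z, hadj, hlt⟩ := step_exists hg hn x y hxy
      obtain ⟨w, hw⟩ := ih z y (by omega)
      exact ⟨Walk.cons hadj w, by simp [Walk.length_cons]; omega⟩

lemma dfun_le_length {n g : ℕ} (hg : 3 ≤ g) (hn : g < n) {x y : Fin n}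
    (w : (lollipop n g).Walk x y) : dfun g x.val y.val ≤ w.length := by
  induction w with
  | nil => simp [dfun_self _ _ hg]
  | @cons u z t hadj p ih =>
    rw [Walk.length_cons]
    have := adj_dfun hg hn hadj t.val
    omega

lemma dist_eq_dfun {n g : ℕ} (hg : 3 ≤ g) (hn : g < n) (x y : Fin n) :
    (lollipop n g).dist x y = dfun g x.val y.val := by
  obtain ⟨w, hw⟩ := exists_walk_le hg hn (dfun g x.val y.val) x y le_rfl
  refine le_antisymm (le_trans (SimpleGraph.dist_le w) hw) ?_
  obtain ⟨p, hp⟩ := (w.reachable).exists_walk_length_eq_dist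
  rw [← hp]
  exact dfun_le_length hg hn p

lemma cyc_rotate (g a : ℕ) (ha : a < g) :
    ∑ k ∈ range g, cyc g a k = ∑ k ∈ range g, cyc g 0 k := by
  refine Finset.sum_nbij' (i := fun k => if k < a then k + g - a else k - a)
    (j := fun k => if k < g - a then k + a else k + a - g) ?_ ?_ ?_ ?_ ?_
  · intro k hk; simp only [mem_range] at *; split_ifs <;> omega
  · intro k hk; simp only [mem_range] at *; split_ifs <;> omega
  · intro k hk; simp only [mem_range] at hk; split_ifs <;> omega
  · intro k hk; simp only [mem_range] at hk; split_ifs <;> omega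
  · intro k hk; simp only [mem_range] at hk
    simp only [cyc]; split_ifs <;> omega

lemma sum_dfun_lt {n g a : ℕ} (hg : 3 ≤ g) (hn : g < n) (ha : a < n - 1) :
    ∑ k ∈ range n, dfun g a k < ∑ k ∈ range n, dfun g (n - 1) k := by
  have split : ∀ (f : ℕ → ℕ) (m : ℕ), m ≤ n →
      ∑ k ∈ range n, f k = ∑ k ∈ range m, f k + ∑ k ∈ Finset.Ico m n, f k := by
    intro f m hm
    rw [range_eq_Ico, ← Finset.sum_Ico_consecutive f (Nat.zero_le m) hm, ← range_eq_Ico]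
  by_cases hag : g ≤ a
  · -- v on the path
    rw [split (dfun g a) a (by omega), split (dfun g (n-1)) a (by omega)]
    have upper : ∑ k ∈ Finset.Ico a n, dfun g a k = ∑ k ∈ Finset.Ico a n, dfun g (n-1) k := by
      rw [Finset.sum_Ico_eq_sum_range, Finset.sum_Ico_eq_sum_range]
      calc ∑ k ∈ range (n - a), dfun g a (a + k)
          = ∑ k ∈ range (n - a), k := by
            refine Finset.sum_congr rfl fun k hk => ?_
            simp only [mem_range] at hk
            simp only [dfun, cyc]; split_ifs <;> omega
        _ = ∑ k ∈ range (n - a), (n - a - 1 - k) := by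
            rw [Finset.sum_range_reflect (fun k => k) (n - a)]
        _ = ∑ k ∈ range (n - a), dfun g (n-1) (a + k) := by
            refine Finset.sum_congr rfl fun k hk => ?_
            simp only [mem_range] at hk
            simp only [dfun, cyc]; split_ifs <;> omega
    rw [upper]
    apply Nat.add_lt_add_right
    refine Finset.sum_lt_sum_of_nonempty ?_ ?_
    · rw [Finset.nonempty_range_iff]; omega
    · intro k hk
      simp only [mem_range] at hk
      simp only [dfun, cyc]; split_ifs <;> omega
  · -- v on the cycle
    push_neg at hag
    set c := min a (g - a) with hc
    set m := n - g with hm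
    rw [split (dfun g a) g (by omega), split (dfun g (n-1)) g (by omega)]
    have cycv : ∑ k ∈ range g, dfun g a k = ∑ k ∈ range g, cyc g 0 k := by
      rw [← cyc_rotate g a hag]
      refine Finset.sum_congr rfl fun k hk => ?_
      simp only [mem_range] at hk
      simp only [dfun]; split_ifs <;> first | rfl | omega
    have cycu : ∑ k ∈ range g, dfun g (n-1) k = (∑ k ∈ range g, cyc g 0 k) + g * m := by
      have : ∀ k ∈ range g, dfun g (n-1) k = cyc g 0 k + m := by
        intro k hk; simp only [mem_range] at hk
        simp only [dfun, cyc]; split_ifs <;> omega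
      rw [Finset.sum_congr rfl this, Finset.sum_add_distrib, Finset.sum_const, card_range,
        smul_eq_mul]
    have pathv : ∑ k ∈ Finset.Ico g n, dfun g a k = m * (c + 1) + ∑ k ∈ range m, k := by
      rw [Finset.sum_Ico_eq_sum_range]
      have : ∀ k ∈ range (n - g), dfun g a (g + k) = (c + 1) + k := by
        intro k hk; simp only [mem_range] at hk
        simp only [dfun, cyc, hc]; split_ifs <;> omega
      rw [Finset.sum_congr rfl this, Finset.sum_add_distrib, Finset.sum_const, card_range,
        smul_eq_mul, ← hm]
    have pathu : ∑ k ∈ Finset.Ico g n, dfun g (n-1) k = ∑ k ∈ range m, k := by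
      rw [Finset.sum_Ico_eq_sum_range]
      have : ∀ k ∈ range (n - g), dfun g (n-1) (g + k) = (n - g) - 1 - k := by
        intro k hk; simp only [mem_range] at hk
        simp only [dfun, cyc]; split_ifs <;> omega
      rw [Finset.sum_congr rfl this, ← hm, Finset.sum_range_reflect (fun k => k) m]
    rw [cycv, cycu, pathv, pathu]
    have hcg : c + 1 < g := by omega
    have hm1 : 1 ≤ m := by omega
    have key : m * (c + 1) < g * m := by
      calc m * (c + 1) < m * g := by
            exact Nat.mul_lt_mul_of_le_of_lt (le_refl m) hcg hm1
        _ = g * m := Nat.mul_comm m g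
    omega

/-- In the lollipop U_{n,g}^l, the pendant vertex has strictly larger distance sum than
every non-pendant vertex. -/
theorem stmt15 (n g : ℕ) (hg : 3 ≤ g) (hn : g < n) (v : Fin n) (hv : v.val ≠ n - 1) :
    distSum (lollipop n g) v <
      distSum (lollipop n g) (⟨n - 1, by omega⟩ : Fin n) := by
  have h1 : ∀ x : Fin n, distSum (lollipop n g) x = ∑ k ∈ range n, dfun g x.val k := by
    intro x
    rw [distSum, ← Fin.sum_univ_eq_sum_range (fun k => dfun g x.val k) n]
    exact Finset.sum_congr rfl fun w _ => dist_eq_dfun hg hn x w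
  rw [h1, h1]
  simp only [Fin.val_mk]
  exact sum_dfun_lt hg hn (by omega)
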